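/- Let G be a finite simple graph and let C₁, …, C_ℓ be a linear order of all maximal cliques of G that is v-consecutive for every vertex v. For each vertex v, let i(v) and j(v) be the smallest and largest index i with v ∈ C_i, respectively. Then assigning to each vertex v the closed interval [i(v), j(v)] ⊆ ℝ yields an interval representation of G: two distinct vertices u, v are adjacent in G if and only if [i(u), j(u)] ∩ [i(v), j(v)] ≠ ∅. -/

import Mathlib

/-- A maximal clique: a set of pairwise adjacent vertices not properly contained in
another clique. -/
def IsMaxClique {V : Type*} (G : SimpleGraph V) (s : Set V) : Prop :=
  G.IsClique s ∧ ∀ t : Set V, G.IsClique t → s ⊆ t → s = t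

lemma exists_maxclique_superset {V : Type*} [Fintype V] (G : SimpleGraph V) (s : Set V)
    (hs : G.IsClique s) : ∃ t : Set V, IsMaxClique G t ∧ s ⊆ t := by
  have hfin : ({t : Set V | G.IsClique t ∧ s ⊆ t}).Finite := Set.toFinite _
  obtain ⟨t, ht, hmax⟩ := hfin.exists_maximal ⟨s, hs, subset_rfl⟩
  refine ⟨t, ⟨ht.1, fun t' ht' hsub => ?_⟩, ht.2⟩
  exact le_antisymm hsub (hmax ⟨ht', ht.2.trans hsub⟩ hsub)

/-- Given a linear order `C 0, …, C (ℓ-1)` of all maximal cliques of a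
finite simple graph `G` that is `v`-consecutive for every vertex `v`, assigning to each
vertex `v` the closed real interval `[iv v, jv v]`, where `iv v` and `jv v` are the
smallest and largest indices of cliques containing `v`, yields an interval
representation of `G`. -/
theorem stmt_10 {V : Type*} [Fintype V] (G : SimpleGraph V)
    (ℓ : ℕ) (C : Fin ℓ → Set V) (hinj : Function.Injective C)
    (hrange : ∀ s : Set V, s ∈ Set.range C ↔ IsMaxClique G s)
    (hconsec : ∀ v : V, ∀ i j k : Fin ℓ, i ≤ j → j ≤ k → v ∈ C i → v ∈ C k → v ∈ C j)
    (iv jv : V → Fin ℓ)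
    (hiv : ∀ v : V, v ∈ C (iv v) ∧ ∀ i : Fin ℓ, v ∈ C i → iv v ≤ i)
    (hjv : ∀ v : V, v ∈ C (jv v) ∧ ∀ i : Fin ℓ, v ∈ C i → i ≤ jv v) :
    ∀ u v : V, u ≠ v →
      (G.Adj u v ↔ (Set.Icc ((iv u : ℕ) : ℝ) ((jv u : ℕ) : ℝ) ∩
        Set.Icc ((iv v : ℕ) : ℝ) ((jv v : ℕ) : ℝ)).Nonempty) := by
  intro u v huv
  constructor
  · intro hadj
    have hclique : G.IsClique {u, v} := by
      intro a ha b hb hab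
      simp only [Set.mem_insert_iff, Set.mem_singleton_iff] at ha hb
      rcases ha with rfl | rfl <;> rcases hb with rfl | rfl <;>
        first | exact hadj | exact hadj.symm | exact absurd rfl hab
    obtain ⟨t, htmax, hsub⟩ := exists_maxclique_superset G _ hclique
    obtain ⟨k, hk⟩ := (hrange t).mpr htmax
    have hu : u ∈ C k := by rw [hk]; exact hsub (by simp)
    have hv : v ∈ C k := by rw [hk]; exact hsub (by simp)
    refine ⟨(k : ℕ), ⟨?_, ?_⟩, ?_, ?_⟩
    · exact_mod_cast Fin.le_iff_val_le_val.mp ((hiv u).2 k hu)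
    · exact_mod_cast Fin.le_iff_val_le_val.mp ((hjv u).2 k hu)
    · exact_mod_cast Fin.le_iff_val_le_val.mp ((hiv v).2 k hv)
    · exact_mod_cast Fin.le_iff_val_le_val.mp ((hjv v).2 k hv)
  · rintro ⟨x, ⟨h1, h2⟩, h3, h4⟩
    -- indices: max (iv u) (iv v) works
    set m : Fin ℓ := max (iv u) (iv v) with hm
    have hiujv : iv u ≤ jv v := by
      have : ((iv u : ℕ) : ℝ) ≤ ((jv v : ℕ) : ℝ) := h1.trans h4
      exact_mod_cast this
    have hivju : iv v ≤ jv u := by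
      have : ((iv v : ℕ) : ℝ) ≤ ((jv u : ℕ) : ℝ) := h3.trans h2
      exact_mod_cast this
    have hmu : u ∈ C m := by
      refine hconsec u (iv u) m (jv u) (le_max_left _ _)
        (max_le ((hiv u).2 _ (hjv u).1) hivju) (hiv u).1 (hjv u).1
    have hmv : v ∈ C m := by
      refine hconsec v (iv v) m (jv v) (le_max_right _ _)
        (max_le hiujv ((hiv v).2 _ (hjv v).1)) (hiv v).1 (hjv v).1
    have : IsMaxClique G (C m) := (hrange (C m)).mp ⟨m, rfl⟩
    exact this.1 hmu hmv huv
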